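/- There is no convex lattice pentagon in ℝ² whose only integral points are its five vertices. -/

import Mathlib

/-- Embedding of the integer lattice into the real plane. -/
def toR (p : ℤ × ℤ) : ℝ × ℝ := ((p.1 : ℝ), (p.2 : ℝ))

lemma toR_inj : Function.Injective toR := by
  intro a b h
  have h1 := congrArg Prod.fst h
  have h2 := congrArg Prod.snd h
  simp only [toR] at h1 h2
  ext
  · exact_mod_cast h1
  · exact_mod_cast h2

lemma parity_dvd {a b : ℤ} (h : (a : ZMod 2) = b) : (2 : ℤ) ∣ a + b := by
  have key : ∀ x y : ZMod 2, x = y → x + y = 0 := by decide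
  have : ((a + b : ℤ) : ZMod 2) = 0 := by push_cast; exact key _ _ h
  exact (ZMod.intCast_zmod_eq_zero_iff_dvd _ 2).mp this

/-- There is no convex lattice pentagon whose only integral points are its
five vertices: any lattice pentagon (five lattice points, all extreme points of their
convex hull) contains a further integral point in its convex hull. -/
theorem no_lattice_pentagon_with_only_vertices (P : Finset (ℤ × ℤ)) (hcard : P.card = 5)
    (hvert : ∀ p ∈ P, toR p ∈ Set.extremePoints ℝ (convexHull ℝ (toR '' ↑P))) :
    ∃ q : ℤ × ℤ, q ∉ P ∧ toR q ∈ convexHull ℝ (toR '' ↑P) := by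
  -- pigeonhole on parity
  have hlt : Fintype.card (ZMod 2 × ZMod 2) < P.card := by simp [hcard]
  obtain ⟨p, hp, q, hq, hne, hpar⟩ :=
    Finset.exists_ne_map_eq_of_card_lt_of_maps_to hlt
      (f := fun r : ℤ × ℤ => ((r.1 : ZMod 2), (r.2 : ZMod 2)))
      (fun x _ => Finset.mem_univ _)
  obtain ⟨k1, hk1⟩ := parity_dvd (congrArg Prod.fst hpar)
  obtain ⟨k2, hk2⟩ := parity_dvd (congrArg Prod.snd hpar)
  set m : ℤ × ℤ := (k1, k2) with hm
  have hpR : toR p ∈ convexHull ℝ (toR '' ↑P) :=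
    subset_convexHull ℝ _ ⟨p, by simpa using hp, rfl⟩
  have hqR : toR q ∈ convexHull ℝ (toR '' ↑P) :=
    subset_convexHull ℝ _ ⟨q, by simpa using hq, rfl⟩
  have hmid : toR m = (1/2 : ℝ) • toR p + (1/2 : ℝ) • toR q := by
    simp only [toR, Prod.smul_mk, Prod.mk_add_mk, smul_eq_mul]
    have e1 : (k1 : ℝ) = ((p.1 : ℝ) + q.1) / 2 := by
      have : ((p.1 + q.1 : ℤ) : ℝ) = ((2 * k1 : ℤ) : ℝ) := by rw [hk1]
      push_cast at this; linarith
    have e2 : (k2 : ℝ) = ((p.2 : ℝ) + q.2) / 2 := by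
      have : ((p.2 + q.2 : ℤ) : ℝ) = ((2 * k2 : ℤ) : ℝ) := by rw [hk2]
      push_cast at this; linarith
    rw [e1, e2, Prod.ext_iff]; constructor <;> · simp; ring
  have hmemOpen : toR m ∈ openSegment ℝ (toR p) (toR q) := by
    refine ⟨1/2, 1/2, by norm_num, by norm_num, by norm_num, hmid.symm⟩
  have hmemSeg : toR m ∈ convexHull ℝ (toR '' ↑P) := by
    have : segment ℝ (toR p) (toR q) ⊆ convexHull ℝ (toR '' ↑P) :=
      (convex_convexHull ℝ _).segment_subset hpR hqR
    exact this (openSegment_subset_segment ℝ _ _ hmemOpen)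
  refine ⟨m, ?_, hmemSeg⟩
  intro hmP
  obtain ⟨-, hext2⟩ := mem_extremePoints.mp (hvert m hmP)
  obtain ⟨heq1, heq2⟩ := hext2 _ hpR _ hqR hmemOpen
  exact hne (toR_inj (heq1.trans heq2.symm))
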